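/- Let n ≥ 2 be an integer with n ≡ 2 (mod 4), let f₀ be the quadratic form on ℚⁿ given by f₀(x) = -x₀² + x₁² + ⋯ + x_{n-1}², and for a positive rational a let f_a be the quadratic form on ℚ^{n+1} given by f_a(x) = f₀(x₀,…,x_{n-1}) + a·x_n². Then for all positive rationals a and b, the forms f_a and f_b are similar: b·f_a is equivalent to a·f_b over ℚ. -/

import Mathlib

/-- Left quaternion multiplication as a linear map on `Fin 4 → ℚ`. -/
private def quatMul (p q r s : ℚ) : (Fin 4 → ℚ) →ₗ[ℚ] (Fin 4 → ℚ) where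
  toFun x := ![p * x 0 - q * x 1 - r * x 2 - s * x 3,
               q * x 0 + p * x 1 - s * x 2 + r * x 3,
               r * x 0 + s * x 1 + p * x 2 - q * x 3,
               s * x 0 - r * x 1 + q * x 2 + p * x 3]
  map_add' x y := by funext i; fin_cases i <;> simp <;> ring
  map_smul' a x := by funext i; fin_cases i <;> simp <;> ring

private lemma quatMul_apply0 (p q r s : ℚ) (x : Fin 4 → ℚ) :
    quatMul p q r s x 0 = p * x 0 - q * x 1 - r * x 2 - s * x 3 := rfl
private lemma quatMul_apply1 (p q r s : ℚ) (x : Fin 4 → ℚ) :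
    quatMul p q r s x 1 = q * x 0 + p * x 1 - s * x 2 + r * x 3 := rfl
private lemma quatMul_apply2 (p q r s : ℚ) (x : Fin 4 → ℚ) :
    quatMul p q r s x 2 = r * x 0 + s * x 1 + p * x 2 - q * x 3 := rfl
private lemma quatMul_apply3 (p q r s : ℚ) (x : Fin 4 → ℚ) :
    quatMul p q r s x 3 = s * x 0 - r * x 1 + q * x 2 + p * x 3 := rfl

private lemma quatMul_comp (c : ℚ) (hc : c ≠ 0) (p q r s : ℚ)
    (hpqrs : p ^ 2 + q ^ 2 + r ^ 2 + s ^ 2 = c) (x : Fin 4 → ℚ) :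
    quatMul (p / c) (-q / c) (-r / c) (-s / c) (quatMul p q r s x) = x := by
  funext i
  fin_cases i
  · rw [show (⟨0, by norm_num⟩ : Fin 4) = 0 from rfl, quatMul_apply0,
      quatMul_apply0, quatMul_apply1, quatMul_apply2, quatMul_apply3]
    field_simp
    linear_combination x 0 * hpqrs
  · rw [show (⟨1, by norm_num⟩ : Fin 4) = 1 from rfl, quatMul_apply1,
      quatMul_apply0, quatMul_apply1, quatMul_apply2, quatMul_apply3]
    field_simp
    linear_combination x 1 * hpqrs
  · rw [show (⟨2, by norm_num⟩ : Fin 4) = 2 from rfl, quatMul_apply2,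
      quatMul_apply0, quatMul_apply1, quatMul_apply2, quatMul_apply3]
    field_simp
    linear_combination x 2 * hpqrs
  · rw [show (⟨3, by norm_num⟩ : Fin 4) = 3 from rfl, quatMul_apply3,
      quatMul_apply0, quatMul_apply1, quatMul_apply2, quatMul_apply3]
    field_simp
    linear_combination x 3 * hpqrs

private lemma quatMul_comp' (c : ℚ) (hc : c ≠ 0) (p q r s : ℚ)
    (hpqrs : p ^ 2 + q ^ 2 + r ^ 2 + s ^ 2 = c) (x : Fin 4 → ℚ) :
    quatMul p q r s (quatMul (p / c) (-q / c) (-r / c) (-s / c) x) = x := by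
  funext i
  fin_cases i
  · rw [show (⟨0, by norm_num⟩ : Fin 4) = 0 from rfl, quatMul_apply0,
      quatMul_apply0, quatMul_apply1, quatMul_apply2, quatMul_apply3]
    field_simp
    linear_combination x 0 * hpqrs
  · rw [show (⟨1, by norm_num⟩ : Fin 4) = 1 from rfl, quatMul_apply1,
      quatMul_apply0, quatMul_apply1, quatMul_apply2, quatMul_apply3]
    field_simp
    linear_combination x 1 * hpqrs
  · rw [show (⟨2, by norm_num⟩ : Fin 4) = 2 from rfl, quatMul_apply2,
      quatMul_apply0, quatMul_apply1, quatMul_apply2, quatMul_apply3]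
    field_simp
    linear_combination x 2 * hpqrs
  · rw [show (⟨3, by norm_num⟩ : Fin 4) = 3 from rfl, quatMul_apply3,
      quatMul_apply0, quatMul_apply1, quatMul_apply2, quatMul_apply3]
    field_simp
    linear_combination x 3 * hpqrs

/-- The quadratic-form-scaling block on four squares. -/
private lemma quat_block (c : ℚ) (hc : 0 < c) :
    ∃ B : (Fin 4 → ℚ) ≃ₗ[ℚ] (Fin 4 → ℚ),
      ∀ x, ∑ j : Fin 4, (B x j) ^ 2 = c * ∑ j : Fin 4, (x j) ^ 2 := by
  obtain ⟨A, B, C, D, h⟩ := Nat.sum_four_squares (c.num.toNat * c.den)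
  have hd : (c.den : ℚ) ≠ 0 := by exact_mod_cast c.den_ne_zero
  have hnum : ((c.num.toNat : ℚ)) = (c.num : ℚ) := by
    exact_mod_cast congrArg (Int.cast : ℤ → ℚ)
      (Int.toNat_of_nonneg (le_of_lt (Rat.num_pos.mpr hc)))
  have h' : ((A : ℚ) ^ 2 + B ^ 2 + C ^ 2 + D ^ 2) = (c.num : ℚ) * c.den := by
    have := congrArg (Nat.cast : ℕ → ℚ) h
    push_cast at this
    rwa [hnum] at this
  have hpqrs : ((A : ℚ) / c.den) ^ 2 + ((B : ℚ) / c.den) ^ 2 + ((C : ℚ) / c.den) ^ 2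
      + ((D : ℚ) / c.den) ^ 2 = c := by
    have key : ((A : ℚ) / c.den) ^ 2 + ((B : ℚ) / c.den) ^ 2 + ((C : ℚ) / c.den) ^ 2
        + ((D : ℚ) / c.den) ^ 2 = ((A : ℚ) ^ 2 + B ^ 2 + C ^ 2 + D ^ 2) / c.den ^ 2 := by
      ring
    rw [key, h', div_eq_iff (pow_ne_zero 2 hd), ← Rat.mul_den_eq_num c]
    ring
  set p := (A : ℚ) / c.den
  set q := (B : ℚ) / c.den
  set r := (C : ℚ) / c.den
  set s := (D : ℚ) / c.den
  have hc' : c ≠ 0 := ne_of_gt hc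
  refine ⟨LinearEquiv.ofLinear (quatMul p q r s)
      (quatMul (p / c) (-q / c) (-r / c) (-s / c))
      (LinearMap.ext fun x => quatMul_comp' c hc' p q r s hpqrs x)
      (LinearMap.ext fun x => quatMul_comp c hc' p q r s hpqrs x), fun x => ?_⟩
  rw [Fin.sum_univ_four, Fin.sum_univ_four, LinearEquiv.ofLinear_apply,
    quatMul_apply0, quatMul_apply1, quatMul_apply2, quatMul_apply3]
  linear_combination (x 0 ^ 2 + x 1 ^ 2 + x 2 ^ 2 + x 3 ^ 2) * hpqrs

/-- The hyperbolic scaling block. -/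
private def hypMul (c : ℚ) : (Fin 2 → ℚ) →ₗ[ℚ] (Fin 2 → ℚ) where
  toFun x := ![(c + 1) / 2 * x 0 + (c - 1) / 2 * x 1,
               (c - 1) / 2 * x 0 + (c + 1) / 2 * x 1]
  map_add' x y := by funext i; fin_cases i <;> simp <;> ring
  map_smul' a x := by funext i; fin_cases i <;> simp <;> ring

private lemma hypMul_apply0 (c : ℚ) (x : Fin 2 → ℚ) :
    hypMul c x 0 = (c + 1) / 2 * x 0 + (c - 1) / 2 * x 1 := rfl
private lemma hypMul_apply1 (c : ℚ) (x : Fin 2 → ℚ) :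
    hypMul c x 1 = (c - 1) / 2 * x 0 + (c + 1) / 2 * x 1 := rfl

private lemma hypMul_comp (c : ℚ) (hc : c ≠ 0) (x : Fin 2 → ℚ) :
    hypMul c⁻¹ (hypMul c x) = x := by
  funext i
  fin_cases i
  · rw [show (⟨0, by norm_num⟩ : Fin 2) = 0 from rfl, hypMul_apply0,
      hypMul_apply0, hypMul_apply1]
    field_simp
    ring
  · rw [show (⟨1, by norm_num⟩ : Fin 2) = 1 from rfl, hypMul_apply1,
      hypMul_apply0, hypMul_apply1]
    field_simp
    ring

private lemma hyp_block (c : ℚ) (hc : 0 < c) :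
    ∃ B : (Fin 2 → ℚ) ≃ₗ[ℚ] (Fin 2 → ℚ),
      ∀ x, ∑ j : Fin 2, (if j.val = 0 then (-1 : ℚ) else 1) * (B x j) ^ 2
        = c * ∑ j : Fin 2, (if j.val = 0 then (-1 : ℚ) else 1) * (x j) ^ 2 := by
  have hc' : c ≠ 0 := ne_of_gt hc
  have hcinv : (c⁻¹)⁻¹ = c := inv_inv c
  refine ⟨LinearEquiv.ofLinear (hypMul c) (hypMul c⁻¹)
      (LinearMap.ext fun x => by
        have := hypMul_comp c⁻¹ (inv_ne_zero hc') x
        rwa [hcinv] at this)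
      (LinearMap.ext fun x => hypMul_comp c hc' x), fun x => ?_⟩
  rw [Fin.sum_univ_two, Fin.sum_univ_two, LinearEquiv.ofLinear_apply,
    hypMul_apply0, hypMul_apply1]
  norm_num
  ring

/-- Extension of two linear autoequivalences to the concatenation. -/
private lemma ext_exists {n m : ℕ} (U : (Fin n → ℚ) ≃ₗ[ℚ] (Fin n → ℚ))
    (W : (Fin m → ℚ) ≃ₗ[ℚ] (Fin m → ℚ)) :
    ∃ T : (Fin (n + m) → ℚ) ≃ₗ[ℚ] (Fin (n + m) → ℚ),
      (∀ x i, T x (Fin.castAdd m i) = U (fun j => x (Fin.castAdd m j)) i) ∧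
      (∀ x j, T x (Fin.natAdd n j) = W (fun j' => x (Fin.natAdd n j')) j) := by
  refine ⟨(LinearEquiv.funCongrLeft ℚ ℚ finSumFinEquiv) ≪≫ₗ
      (LinearEquiv.sumArrowLequivProdArrow _ _ ℚ ℚ) ≪≫ₗ (U.prodCongr W) ≪≫ₗ
      (LinearEquiv.sumArrowLequivProdArrow _ _ ℚ ℚ).symm ≪≫ₗ
      (LinearEquiv.funCongrLeft ℚ ℚ finSumFinEquiv.symm), ?_, ?_⟩ <;>
    intro x i <;>
    simp [LinearEquiv.funCongrLeft, LinearEquiv.sumArrowLequivProdArrow,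
      Equiv.sumArrowEquivProdArrow, LinearMap.funLeft, Function.comp] <;>
    congr 1

/-- Key lemma: the lorentzian form in `4k+2` variables scales by any positive rational. -/
private lemma key (c : ℚ) (hc : 0 < c) :
    ∀ (k n : ℕ), n = 4 * k + 2 →
    ∃ U : (Fin n → ℚ) ≃ₗ[ℚ] (Fin n → ℚ),
      ∀ x, (∑ i : Fin n, (if i.val = 0 then (-1 : ℚ) else 1) * (U x i) ^ 2)
        = c * ∑ i : Fin n, (if i.val = 0 then (-1 : ℚ) else 1) * (x i) ^ 2 := by
  intro k
  induction k with
  | zero =>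
    intro n hn
    subst hn
    exact hyp_block c hc
  | succ k ih =>
    intro n hn
    have hn' : n = (4 * k + 2) + 4 := by omega
    subst hn'
    obtain ⟨U, hU⟩ := ih (4 * k + 2) rfl
    obtain ⟨B, hB⟩ := quat_block c hc
    obtain ⟨T, hT1, hT2⟩ := ext_exists U B
    refine ⟨T, fun x => ?_⟩
    rw [Fin.sum_univ_add (f := fun i : Fin (4 * k + 2 + 4) =>
        (if i.val = 0 then (-1 : ℚ) else 1) * (T x i) ^ 2),
      Fin.sum_univ_add (f := fun i : Fin (4 * k + 2 + 4) =>
        (if i.val = 0 then (-1 : ℚ) else 1) * (x i) ^ 2)]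
    have e1 : ∀ i : Fin (4 * k + 2),
        (if (Fin.castAdd 4 i).val = 0 then (-1 : ℚ) else 1) * (T x (Fin.castAdd 4 i)) ^ 2
        = (if i.val = 0 then (-1 : ℚ) else 1) * (U (fun j => x (Fin.castAdd 4 j)) i) ^ 2 := by
      intro i
      rw [hT1, Fin.coe_castAdd]
    have e2 : ∀ j : Fin 4,
        (if (Fin.natAdd (4 * k + 2) j).val = 0 then (-1 : ℚ) else 1)
          * (T x (Fin.natAdd (4 * k + 2) j)) ^ 2
        = (B (fun j' => x (Fin.natAdd (4 * k + 2) j')) j) ^ 2 := by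
      intro j
      rw [hT2]
      have : ¬ ((Fin.natAdd (4 * k + 2) j).val = 0) := by
        simp [Fin.coe_natAdd]
      rw [if_neg this, one_mul]
    have e3 : ∀ i : Fin (4 * k + 2),
        (if (Fin.castAdd 4 i).val = 0 then (-1 : ℚ) else 1) * (x (Fin.castAdd 4 i)) ^ 2
        = (if i.val = 0 then (-1 : ℚ) else 1) * ((fun j => x (Fin.castAdd 4 j)) i) ^ 2 := by
      intro i
      rw [Fin.coe_castAdd]
    have e4 : ∀ j : Fin 4,
        (if (Fin.natAdd (4 * k + 2) j).val = 0 then (-1 : ℚ) else 1)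
          * (x (Fin.natAdd (4 * k + 2) j)) ^ 2
        = ((fun j' => x (Fin.natAdd (4 * k + 2) j')) j) ^ 2 := by
      intro j
      have : ¬ ((Fin.natAdd (4 * k + 2) j).val = 0) := by
        simp [Fin.coe_natAdd]
      rw [if_neg this, one_mul]
    rw [Finset.sum_congr rfl fun i _ => e1 i, Finset.sum_congr rfl fun j _ => e2 j,
      Finset.sum_congr rfl fun i _ => e3 i, Finset.sum_congr rfl fun j _ => e4 j,
      hU, hB]
    ring

/-- For `n ≥ 2` with `n ≡ 2 (mod 4)`,
`f₀(x) = -x₀² + x₁² + ⋯ + x_{n-1}²` on `ℚⁿ`, and `f_a = f₀ + a·x_n²` on `ℚ^{n+1}`,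
for all positive rationals `a, b` the forms `f_a` and `f_b` are similar:
`b·f_a` is equivalent to `a·f_b` over `ℚ`. -/
theorem forms_similar_of_two_mod_four
    (n : ℕ) (hn : 2 ≤ n) (hmod : n % 4 = 2)
    (a b : ℚ) (ha : 0 < a) (hb : 0 < b)
    (fa fb : (Fin (n + 1) → ℚ) → ℚ)
    (hfa : ∀ x, fa x =
      (∑ i : Fin n, (if i.val = 0 then (-1 : ℚ) else 1) * x i.castSucc ^ 2)
        + a * x (Fin.last n) ^ 2)
    (hfb : ∀ x, fb x =
      (∑ i : Fin n, (if i.val = 0 then (-1 : ℚ) else 1) * x i.castSucc ^ 2)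
        + b * x (Fin.last n) ^ 2) :
    ∃ T : (Fin (n + 1) → ℚ) ≃ₗ[ℚ] (Fin (n + 1) → ℚ),
      ∀ x, a * fb (T x) = b * fa x := by
  have hc : (0 : ℚ) < b / a := div_pos hb ha
  obtain ⟨U, hU⟩ := key (b / a) hc (n / 4) n (by omega)
  obtain ⟨T, hT1, hT2⟩ := ext_exists U (LinearEquiv.refl ℚ (Fin 1 → ℚ))
  refine ⟨T, fun x => ?_⟩
  have hcast : ∀ i : Fin n, (i.castSucc : Fin (n + 1)) = Fin.castAdd 1 i := fun i => rfl
  have hlast : (Fin.last n : Fin (n + 1)) = Fin.natAdd n 0 := by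
    ext
    simp
  have hTlast : T x (Fin.last n) = x (Fin.last n) := by
    rw [hlast, hT2]
    rfl
  have hTc : ∀ i : Fin n, T x i.castSucc = U (fun j => x j.castSucc) i := by
    intro i
    rw [hcast, hT1]
    rfl
  rw [hfa, hfb, hTlast]
  have hsum : (∑ i : Fin n, (if i.val = 0 then (-1 : ℚ) else 1) * (T x i.castSucc) ^ 2)
      = (b / a) * ∑ i : Fin n, (if i.val = 0 then (-1 : ℚ) else 1) * (x i.castSucc) ^ 2 := by
    rw [Finset.sum_congr rfl fun i _ => by rw [hTc i]]
    exact hU (fun j => x j.castSucc)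
  rw [hsum]
  have ha' : a ≠ 0 := ne_of_gt ha
  field_simp
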